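/- Let M > 0, let ρ : ℝ → ℝ be continuous on [0, M], let γ₀ ∈ (0, M) and suppose ρ(γ₀) ≠ 0. Then the correlator G(ω) = ∫_0^M ρ(γ)/(ω + iγ) dγ has a genuine branch-cut at −iγ₀: there is no continuous function h defined on an open neighborhood U of −iγ₀ in ℂ such that h(ω) = G(ω) for every ω ∈ U with Re ω ≠ 0. -/
import Mathlib


open MeasureTheory Complex

/-- The retarded correlator `G(ω) = ∫_0^M ρ(γ)/(ω + iγ) dγ`. -/
noncomputable def corr (M : ℝ) (ρ : ℝ → ℝ) (ω : ℂ) : ℂ :=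
  ∫ γ in (0:ℝ)..M, (ρ γ : ℂ) / (ω + Complex.I * (γ : ℂ))

namespace BranchCutAux

open Filter intervalIntegral

lemma pointwise_diff (x u : ℝ) (hx : x ≠ 0) :
    (1:ℂ)/((x:ℂ) + I*u) - 1/((-x:ℂ) + I*u) = ((2*x/(x^2 + u^2) : ℝ) : ℂ) := by
  have h1 : (x:ℂ) + I*u ≠ 0 := by
    intro h; apply hx; have := congrArg Complex.re h; simpa using this
  have h2 : (-x:ℂ) + I*u ≠ 0 := by
    intro h; apply hx; have := congrArg Complex.re h; simp at this; linarith
  have h3 : (x:ℝ)^2 + u^2 ≠ 0 := by positivity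
  have h3' : ((x:ℂ))^2 + (u:ℂ)^2 ≠ 0 := by
    rw [show ((x:ℂ))^2 + (u:ℂ)^2 = ((x^2+u^2 : ℝ) : ℂ) by push_cast; ring]
    exact_mod_cast h3
  push_cast
  field_simp
  ring_nf
  simp [Complex.I_sq]

lemma corr_integrable (M : ℝ) (ρ : ℝ → ℝ) (hρ : ContinuousOn ρ (Set.Icc 0 M))
    (hM : 0 ≤ M) (ω : ℂ) (hω : ω.re ≠ 0) :
    IntervalIntegrable (fun γ : ℝ => (ρ γ : ℂ) / (ω + Complex.I * (γ : ℂ)))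
      volume 0 M := by
  apply ContinuousOn.intervalIntegrable
  rw [Set.uIcc_of_le hM]
  apply ContinuousOn.div
  · exact Complex.continuous_ofReal.comp_continuousOn hρ
  · exact (Continuous.continuousOn (by continuity))
  · intro γ _ h
    apply hω
    have := congrArg Complex.re h
    simpa using this

/-- Key identity: the jump of the correlator across the cut is a Poisson-type
real integral. -/
lemma jump_eq (M : ℝ) (hM : 0 < M) (ρ : ℝ → ℝ) (hρ : ContinuousOn ρ (Set.Icc 0 M))
    (γ₀ : ℝ) (x : ℝ) (hx : x ≠ 0) :
    corr M ρ ((x:ℂ) - I*γ₀) - corr M ρ ((-x:ℂ) - I*γ₀) =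
      ((∫ γ in (0:ℝ)..M, ρ γ * (2*x/(x^2 + (γ-γ₀)^2))) : ℝ) := by
  have hre1 : ((x:ℂ) - I*γ₀).re = x := by simp
  have hre2 : ((-x:ℂ) - I*γ₀).re = -x := by simp
  have i1 := corr_integrable M ρ hρ hM.le ((x:ℂ) - I*γ₀) (by rw [hre1]; exact hx)
  have i2 := corr_integrable M ρ hρ hM.le ((-x:ℂ) - I*γ₀)
    (by rw [hre2]; simpa using hx)
  rw [corr, corr, ← intervalIntegral.integral_sub i1 i2,
    ← intervalIntegral.integral_ofReal]
  apply intervalIntegral.integral_congr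
  intro γ _
  have key := pointwise_diff x (γ - γ₀) hx
  have e1 : ((x:ℂ) - I*γ₀) + Complex.I * γ = (x:ℂ) + I*((γ - γ₀ : ℝ):ℂ) := by push_cast; ring
  have e2 : ((-x:ℂ) - I*γ₀) + Complex.I * γ = (-x:ℂ) + I*((γ - γ₀ : ℝ):ℂ) := by push_cast; ring
  simp only [e1, e2]
  rw [div_eq_mul_one_div ((ρ γ : ℂ)) ((x:ℂ) + I*((γ - γ₀ : ℝ):ℂ)),
    div_eq_mul_one_div ((ρ γ : ℂ)) ((-x:ℂ) + I*((γ - γ₀ : ℝ):ℂ)), ← mul_sub, key]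
  push_cast
  ring

set_option maxHeartbeats 1600000 in
/-- If `ρ(γ₀) > 0`, the jump does not tend to `0`. -/
lemma not_tendsto_jump (M : ℝ) (hM : 0 < M) (ρ : ℝ → ℝ)
    (hρ : ContinuousOn ρ (Set.Icc 0 M)) (γ₀ : ℝ) (hγ₀ : γ₀ ∈ Set.Ioo 0 M)
    (hpos : 0 < ρ γ₀) :
    ¬ Tendsto (fun x : ℝ => corr M ρ ((x:ℂ) - I*γ₀) - corr M ρ ((-x:ℂ) - I*γ₀))
      (nhdsWithin 0 (Set.Ioi 0)) (nhds 0) := by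
  intro hten
  obtain ⟨hγ₀l, hγ₀r⟩ := hγ₀
  set c := ρ γ₀ / 2 with hc
  have hcpos : 0 < c := by positivity
  -- bound on |ρ|
  obtain ⟨K₀, hK₀⟩ := isCompact_Icc.exists_bound_of_continuousOn hρ
  set K := max K₀ 1 with hKdef
  have hK1 : (1:ℝ) ≤ K := le_max_right _ _
  have hKpos : 0 < K := lt_of_lt_of_le one_pos hK1
  have hK : ∀ γ ∈ Set.Icc (0:ℝ) M, |ρ γ| ≤ K := fun γ hγ =>
    le_trans (hK₀ γ hγ) (le_max_left _ _)
  -- lower bound on ρ near γ₀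
  have hcont : ContinuousAt ρ γ₀ := hρ.continuousAt (Icc_mem_nhds hγ₀l hγ₀r)
  obtain ⟨δ', hδ'pos, hδ'⟩ := Metric.continuousAt_iff.mp hcont c hcpos
  set δ := min (δ'/2) (min γ₀ (M - γ₀)) with hδdef
  have hδpos : 0 < δ := lt_min (by positivity) (lt_min hγ₀l (by linarith))
  have hδγ₀ : δ ≤ γ₀ := le_trans (min_le_right _ _) (min_le_left _ _)
  have hδM : δ ≤ M - γ₀ := le_trans (min_le_right _ _) (min_le_right _ _)
  have hρlb : ∀ γ ∈ Set.Icc (γ₀ - δ) (γ₀ + δ), c ≤ ρ γ := by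
    intro γ ⟨h1, h2⟩
    have hdist : dist γ γ₀ < δ' := by
      rw [Real.dist_eq]
      have hd : δ ≤ δ'/2 := min_le_left _ _
      rw [abs_lt]; constructor <;> linarith
    have := hδ' hdist
    rw [Real.dist_eq, abs_lt] at this
    simp only [hc]
    linarith
  -- integrability of the Poisson-type integrand
  have hginteg : ∀ x : ℝ, 0 < x → ∀ a b : ℝ, Set.uIcc a b ⊆ Set.Icc 0 M →
      IntervalIntegrable (fun γ => ρ γ * (2*x/(x^2 + (γ-γ₀)^2))) volume a b := by
    intro x hx a b hab
    apply ContinuousOn.intervalIntegrable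
    apply ContinuousOn.mul (hρ.mono hab)
    apply Continuous.continuousOn
    apply Continuous.div continuous_const (by continuity)
    intro γ
    positivity
  -- the quantitative lower bound
  set x₀ := min δ (c*δ^2/(4*K*M)) with hx₀def
  have hx₀pos : 0 < x₀ := lt_min hδpos (by positivity)
  have hRlb : ∀ x ∈ Set.Ioo (0:ℝ) x₀,
      c ≤ ∫ γ in (0:ℝ)..M, ρ γ * (2*x/(x^2 + (γ-γ₀)^2)) := by
    rintro x ⟨hx, hxlt⟩
    have hxδ : x < δ := lt_of_lt_of_le hxlt (min_le_left _ _)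
    have hxc : x ≤ c*δ^2/(4*K*M) := le_of_lt (lt_of_lt_of_le hxlt (min_le_right _ _))
    set g := fun γ : ℝ => ρ γ * (2*x/(x^2 + (γ-γ₀)^2)) with hg
    have sub1 : Set.uIcc (0:ℝ) (γ₀-δ) ⊆ Set.Icc 0 M := by
      rw [Set.uIcc_of_le (by linarith)]
      exact Set.Icc_subset_Icc (le_refl _) (by linarith)
    have sub2 : Set.uIcc (γ₀-δ) (γ₀+δ) ⊆ Set.Icc 0 M := by
      rw [Set.uIcc_of_le (by linarith)]
      exact Set.Icc_subset_Icc (by linarith) (by linarith)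
    have sub3 : Set.uIcc (γ₀+δ) M ⊆ Set.Icc 0 M := by
      rw [Set.uIcc_of_le (by linarith)]
      exact Set.Icc_subset_Icc (by linarith) (le_refl _)
    have iA : IntervalIntegrable g volume 0 (γ₀-δ) := hginteg x hx _ _ sub1
    have iB : IntervalIntegrable g volume (γ₀-δ) (γ₀+δ) := hginteg x hx _ _ sub2
    have iC : IntervalIntegrable g volume (γ₀+δ) M := hginteg x hx _ _ sub3
    have iAB : IntervalIntegrable g volume 0 (γ₀+δ) := iA.trans iB
    have split1 : (∫ γ in (0:ℝ)..(γ₀-δ), g γ) + (∫ γ in (γ₀-δ)..(γ₀+δ), g γ)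
        + (∫ γ in (γ₀+δ)..M, g γ) = ∫ γ in (0:ℝ)..M, g γ := by
      rw [integral_add_adjacent_intervals iA iB, integral_add_adjacent_intervals iAB iC]
    -- bound for the outer pieces
    set E := K * (2*x/δ^2) with hEdef
    have hEpos : 0 < E := by positivity
    have houter : ∀ a b : ℝ, a ≤ b → Set.uIcc a b ⊆ Set.Icc 0 M →
        (∀ γ ∈ Set.Ioc a b, δ^2 ≤ (γ-γ₀)^2) → b - a ≤ M →
        |∫ γ in a..b, g γ| ≤ E * M := by
      intro a b hab habM hfar hba
      have hb : ∀ γ ∈ Set.uIoc a b, ‖g γ‖ ≤ E := by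
        intro γ hγ
        rw [Set.uIoc_of_le hab] at hγ
        have hmem : γ ∈ Set.Icc (0:ℝ) M := habM (by
          rw [Set.uIcc_of_le hab]; exact Set.Ioc_subset_Icc_self hγ)
        have hu : δ^2 ≤ (γ-γ₀)^2 := hfar γ hγ
        have hkb : 2*x/(x^2 + (γ-γ₀)^2) ≤ 2*x/δ^2 := by
          apply div_le_div_of_nonneg_left (by positivity) (by positivity)
          nlinarith [sq_nonneg x]
        have hknn : (0:ℝ) ≤ 2*x/(x^2 + (γ-γ₀)^2) := by positivity
        have hnorm : ‖g γ‖ = |ρ γ| * (2*x/(x^2 + (γ-γ₀)^2)) := by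
          show ‖ρ γ * (2*x/(x^2 + (γ-γ₀)^2))‖ = _
          rw [Real.norm_eq_abs, abs_mul, _root_.abs_of_nonneg hknn]
        rw [hnorm]
        exact mul_le_mul (hK γ hmem) hkb (by positivity) hKpos.le
      calc |∫ γ in a..b, g γ| ≤ E * |b - a| := by
            simpa using intervalIntegral.norm_integral_le_of_norm_le_const hb
        _ ≤ E * M := by
            rw [_root_.abs_of_nonneg (by linarith)]
            exact mul_le_mul_of_nonneg_left hba hEpos.le
    have houter1 : |∫ γ in (0:ℝ)..(γ₀-δ), g γ| ≤ E * M := by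
      refine houter 0 (γ₀-δ) (by linarith) sub1 (fun γ hγ => ?_) (by linarith)
      nlinarith [hγ.2, hδpos]
    have houter3 : |∫ γ in (γ₀+δ)..M, g γ| ≤ E * M := by
      refine houter (γ₀+δ) M (by linarith) sub3 (fun γ hγ => ?_) (by linarith)
      nlinarith [hγ.1, hδpos]
    -- middle piece
    have sub2a : Set.uIcc (γ₀-δ) (γ₀-x) ⊆ Set.Icc 0 M := by
      rw [Set.uIcc_of_le (by linarith)]
      exact Set.Icc_subset_Icc (by linarith) (by linarith)
    have sub2b : Set.uIcc (γ₀-x) (γ₀+x) ⊆ Set.Icc 0 M := by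
      rw [Set.uIcc_of_le (by linarith)]
      exact Set.Icc_subset_Icc (by linarith) (by linarith)
    have sub2c : Set.uIcc (γ₀+x) (γ₀+δ) ⊆ Set.Icc 0 M := by
      rw [Set.uIcc_of_le (by linarith)]
      exact Set.Icc_subset_Icc (by linarith) (by linarith)
    have iB1 : IntervalIntegrable g volume (γ₀-δ) (γ₀-x) := hginteg x hx _ _ sub2a
    have iB2 : IntervalIntegrable g volume (γ₀-x) (γ₀+x) := hginteg x hx _ _ sub2b
    have iB3 : IntervalIntegrable g volume (γ₀+x) (γ₀+δ) := hginteg x hx _ _ sub2c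
    have splitB : (∫ γ in (γ₀-δ)..(γ₀-x), g γ) + (∫ γ in (γ₀-x)..(γ₀+x), g γ)
        + (∫ γ in (γ₀+x)..(γ₀+δ), g γ) = ∫ γ in (γ₀-δ)..(γ₀+δ), g γ := by
      rw [integral_add_adjacent_intervals iB1 iB2,
        integral_add_adjacent_intervals (iB1.trans iB2) iB3]
    have hgnn : ∀ γ ∈ Set.Icc (γ₀-δ) (γ₀+δ), 0 ≤ g γ := by
      intro γ hγ
      exact mul_nonneg (le_trans hcpos.le (hρlb γ hγ)) (by positivity)
    have n1 : 0 ≤ ∫ γ in (γ₀-δ)..(γ₀-x), g γ := by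
      apply intervalIntegral.integral_nonneg (by linarith)
      intro γ hγ
      exact hgnn γ ⟨hγ.1, by linarith [hγ.2]⟩
    have n3 : 0 ≤ ∫ γ in (γ₀+x)..(γ₀+δ), g γ := by
      apply intervalIntegral.integral_nonneg (by linarith)
      intro γ hγ
      exact hgnn γ ⟨by linarith [hγ.1], hγ.2⟩
    have nmid : 2*c ≤ ∫ γ in (γ₀-x)..(γ₀+x), g γ := by
      have hmono := intervalIntegral.integral_mono_on (by linarith : γ₀-x ≤ γ₀+x)
        (intervalIntegrable_const : IntervalIntegrable (fun _ : ℝ => c/x) volume _ _)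
        iB2 (by
          intro γ hγ
          have h1 : c ≤ ρ γ := hρlb γ ⟨by linarith [hγ.1], by linarith [hγ.2]⟩
          have h2 : 1/x ≤ 2*x/(x^2 + (γ-γ₀)^2) := by
            rw [div_le_div_iff₀ hx (by positivity)]
            nlinarith [hγ.1, hγ.2]
          calc c/x = c * (1/x) := by ring
            _ ≤ ρ γ * (2*x/(x^2 + (γ-γ₀)^2)) :=
              mul_le_mul h1 h2 (by positivity) (le_trans hcpos.le h1)
            _ = g γ := rfl)
      rw [intervalIntegral.integral_const, smul_eq_mul] at hmono
      have : (γ₀ + x - (γ₀ - x)) * (c/x) = 2*c := by field_simp; ring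
      linarith [hmono, this.symm.le.trans hmono]
    -- put it together
    have hE2 : 2 * (E * M) ≤ c := by
      have h4 : x * (4*K*M) ≤ c * δ^2 := by
        rw [← le_div_iff₀ (by positivity)]
        calc x ≤ c*δ^2/(4*K*M) := hxc
          _ = c * δ^2 / (4*K*M) := by ring
      have he : 2 * (E * M) = (x*(4*K*M))/δ^2 := by rw [hEdef]; ring
      rw [he, div_le_iff₀ (by positivity)]
      nlinarith [h4, sq_nonneg δ, hδpos]
    have hBge : 2*c ≤ ∫ γ in (γ₀-δ)..(γ₀+δ), g γ := by
      rw [← splitB]; linarith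
    rw [← split1]
    have a1 := neg_abs_le (∫ γ in (0:ℝ)..(γ₀-δ), g γ)
    have a3 := neg_abs_le (∫ γ in (γ₀+δ)..M, g γ)
    linarith
  -- derive the contradiction
  have hev1 : ∀ᶠ x : ℝ in nhdsWithin 0 (Set.Ioi 0),
      dist (corr M ρ ((x:ℂ) - I*γ₀) - corr M ρ ((-x:ℂ) - I*γ₀)) 0 < c :=
    Metric.tendsto_nhds.mp hten c hcpos
  have hev2 : Set.Ioo (0:ℝ) x₀ ∈ nhdsWithin (0:ℝ) (Set.Ioi 0) :=
    Ioo_mem_nhdsGT_of_mem ⟨le_refl 0, hx₀pos⟩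
  obtain ⟨x, hx1, hx2⟩ := (hev1.and (eventually_of_mem hev2 (fun x hx => hx))).exists
  rw [jump_eq M hM ρ hρ γ₀ x (ne_of_gt hx2.1), dist_eq_norm, sub_zero,
    Complex.norm_real, Real.norm_eq_abs] at hx1
  have hge := hRlb x hx2
  have := le_abs_self (∫ γ in (0:ℝ)..M, ρ γ * (2*x/(x^2 + (γ-γ₀)^2)))
  linarith

end BranchCutAux

/-- if `ρ(γ₀) ≠ 0` for some `γ₀ ∈ (0, M)`, the correlator has a genuine
branch-cut at `−iγ₀`: no continuous function on a neighborhood of `−iγ₀` agrees with `G`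
off the imaginary axis. -/
theorem correlator_branch_cut (M : ℝ) (hM : 0 < M) (ρ : ℝ → ℝ)
    (hρ : ContinuousOn ρ (Set.Icc 0 M)) (γ₀ : ℝ) (hγ₀ : γ₀ ∈ Set.Ioo 0 M)
    (hργ₀ : ρ γ₀ ≠ 0) :
    ¬ ∃ (U : Set ℂ) (h : ℂ → ℂ), IsOpen U ∧ (-Complex.I * (γ₀ : ℂ)) ∈ U ∧
        ContinuousOn h U ∧ ∀ ω ∈ U, ω.re ≠ 0 → h ω = corr M ρ ω := by
  rintro ⟨U, h, hU, hpU, hcont, hagree⟩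
  set p : ℂ := -Complex.I * (γ₀ : ℂ) with hp
  -- the two approach paths
  have hf : Filter.Tendsto (fun x : ℝ => ((x:ℂ) - I*γ₀)) (nhdsWithin 0 (Set.Ioi 0)) (nhds p) := by
    have : Filter.Tendsto (fun x : ℝ => ((x:ℂ) - I*γ₀)) (nhds 0) (nhds p) := by
      have : Continuous (fun x : ℝ => ((x:ℂ) - I*γ₀)) := by continuity
      have h0 := this.tendsto 0
      simpa [hp, neg_mul] using h0
    exact this.mono_left nhdsWithin_le_nhds
  have hg : Filter.Tendsto (fun x : ℝ => ((-x:ℂ) - I*γ₀)) (nhdsWithin 0 (Set.Ioi 0)) (nhds p) := by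
    have : Filter.Tendsto (fun x : ℝ => ((-x:ℂ) - I*γ₀)) (nhds 0) (nhds p) := by
      have : Continuous (fun x : ℝ => ((-x:ℂ) - I*γ₀)) := by continuity
      have h0 := this.tendsto 0
      simpa [hp, neg_mul] using h0
    exact this.mono_left nhdsWithin_le_nhds
  have hcp : Filter.Tendsto h (nhds p) (nhds (h p)) :=
    (hcont.continuousAt (IsOpen.mem_nhds hU hpU)).tendsto
  -- eventually the paths are in U and have nonzero real part, so h = corr there
  have hUf : ∀ᶠ x : ℝ in nhdsWithin 0 (Set.Ioi 0), ((x:ℂ) - I*γ₀) ∈ U :=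
    hf.eventually (hU.eventually_mem hpU)
  have hUg : ∀ᶠ x : ℝ in nhdsWithin 0 (Set.Ioi 0), ((-x:ℂ) - I*γ₀) ∈ U :=
    hg.eventually (hU.eventually_mem hpU)
  have hxpos : ∀ᶠ x : ℝ in nhdsWithin 0 (Set.Ioi 0), 0 < x :=
    self_mem_nhdsWithin
  have heq : ∀ᶠ x : ℝ in nhdsWithin 0 (Set.Ioi 0),
      corr M ρ ((x:ℂ) - I*γ₀) - corr M ρ ((-x:ℂ) - I*γ₀) =
      h ((x:ℂ) - I*γ₀) - h ((-x:ℂ) - I*γ₀) := by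
    filter_upwards [hUf, hUg, hxpos] with x h1 h2 h3
    rw [hagree _ h1 (by simp; exact ne_of_gt h3),
        hagree _ h2 (by simp; intro hc; exact absurd hc (ne_of_gt h3))]
  have hten : Filter.Tendsto
      (fun x : ℝ => corr M ρ ((x:ℂ) - I*γ₀) - corr M ρ ((-x:ℂ) - I*γ₀))
      (nhdsWithin 0 (Set.Ioi 0)) (nhds 0) := by
    have t1 : Filter.Tendsto (fun x : ℝ => h ((x:ℂ) - I*γ₀) - h ((-x:ℂ) - I*γ₀))
        (nhdsWithin 0 (Set.Ioi 0)) (nhds (h p - h p)) :=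
      (hcp.comp hf).sub (hcp.comp hg)
    rw [sub_self] at t1
    exact t1.congr' (by filter_upwards [heq] with x hx using hx.symm)
  rcases lt_or_gt_of_ne hργ₀ with hneg | hpos
  · -- apply the aux lemma to -ρ
    have hρ' : ContinuousOn (fun γ => -ρ γ) (Set.Icc 0 M) := hρ.neg
    have hcorr : ∀ ω : ℂ, corr M (fun γ => -ρ γ) ω = -corr M ρ ω := by
      intro ω
      rw [corr, corr, ← intervalIntegral.integral_neg]
      apply intervalIntegral.integral_congr
      intro γ _
      push_cast
      ring
    apply BranchCutAux.not_tendsto_jump M hM (fun γ => -ρ γ) hρ' γ₀ hγ₀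
      (by simpa using hneg)
    have := hten.neg
    rw [neg_zero] at this
    refine this.congr (fun x => ?_)
    rw [hcorr, hcorr]
    ring
  · exact BranchCutAux.not_tendsto_jump M hM ρ hρ γ₀ hγ₀ hpos hten
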